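/- A graph that is hole-free, paraglider-free, and contains no induced complement of C6 is weakly chordal. -/

import Mathlib

open SimpleGraph

/-- `H` occurs as an induced subgraph of `G`. -/
def HasInducedCopy {V W : Type} (G : SimpleGraph V) (H : SimpleGraph W) : Prop :=
  Nonempty (H ↪g G)

/-- `G` has no induced chordless cycle with at least 5 vertices. -/
def HoleFree {V : Type} (G : SimpleGraph V) : Prop :=
  ∀ n : ℕ, 5 ≤ n → ¬ HasInducedCopy G (cycleGraph n)

/-- the disjoint union of a `P₂` and a `P₃`. -/
def p2p3 : SimpleGraph (Fin 5) :=
  SimpleGraph.fromRel (fun i j => (i, j) ∈ ([(0,1),(2,3),(3,4)] : List (Fin 5 × Fin 5)))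

/-- the paraglider: a diamond on `0,1,2,3` (missing edge `2-3`) plus vertex `4` seeing `2,3`. -/
def paraglider : SimpleGraph (Fin 5) :=
  SimpleGraph.fromRel
    (fun i j => (i, j) ∈ ([(0,1),(0,2),(0,3),(1,2),(1,3),(4,2),(4,3)] : List (Fin 5 × Fin 5)))

/-- the diamond `K₄ - e`. -/
def diamond : SimpleGraph (Fin 4) :=
  SimpleGraph.fromRel
    (fun i j => (i, j) ∈ ([(0,1),(0,2),(0,3),(1,2),(1,3)] : List (Fin 4 × Fin 4)))

/-- three independent edges. -/
def threeK2 : SimpleGraph (Fin 6) :=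
  SimpleGraph.fromRel (fun i j => (i, j) ∈ ([(0,1),(2,3),(4,5)] : List (Fin 6 × Fin 6)))

/-- the matched co-bipartite graph: two cliques of size `k` joined by a perfect matching. -/
def matchedCoBip (k : ℕ) : SimpleGraph (Fin k ⊕ Fin k) :=
  SimpleGraph.fromRel (fun x y =>
    (∃ i j, x = Sum.inl i ∧ y = Sum.inl j) ∨ (∃ i j, x = Sum.inr i ∧ y = Sum.inr j) ∨
    (∃ i, x = Sum.inl i ∧ y = Sum.inr i))

/-- `G` has no induced hole and no induced antihole. -/
def WeaklyChordal {V : Type} (G : SimpleGraph V) : Prop :=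
  ∀ n : ℕ, 5 ≤ n →
    ¬ HasInducedCopy G (cycleGraph n) ∧ ¬ HasInducedCopy G (cycleGraph n)ᶜ

/-- a clique `K` whose removal disconnects the graph. -/
def HasCliqueSeparator {V : Type} (G : SimpleGraph V) : Prop :=
  ∃ K : Set V, G.IsClique K ∧ ¬ (G.induce Kᶜ).Preconnected

/-- an atom: a connected graph with no clique separator. -/
def IsAtomGraph {V : Type} (G : SimpleGraph V) : Prop :=
  G.Connected ∧ ¬ HasCliqueSeparator G


lemma cyc_adj {n : ℕ} (hn : 2 ≤ n) (a b : ℕ) (ha : a < n) (hb : b < n) :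
    (cycleGraph n).Adj ⟨a, ha⟩ ⟨b, hb⟩ ↔
      (a + 1 = b ∨ b + 1 = a ∨ (a = 0 ∧ b = n - 1) ∨ (b = 0 ∧ a = n - 1)) := by
  rw [cycleGraph_adj']
  simp only [Fin.sub_def, Fin.val_mk]
  constructor
  · rintro (h | h) <;>
    · rcases Nat.lt_or_ge ((n - _) + _) n with hlt | hge
      · rw [Nat.mod_eq_of_lt hlt] at h; omega
      · rw [Nat.mod_eq_sub_mod hge, Nat.mod_eq_of_lt (by omega)] at h; omega
  · intro h
    rcases h with h | h | h | h
    · right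
      rcases Nat.lt_or_ge ((n - a) + b) n with hlt | hge
      · rw [Nat.mod_eq_of_lt hlt]; omega
      · rw [Nat.mod_eq_sub_mod hge, Nat.mod_eq_of_lt (by omega)]; omega
    · left
      rcases Nat.lt_or_ge ((n - b) + a) n with hlt | hge
      · rw [Nat.mod_eq_of_lt hlt]; omega
      · rw [Nat.mod_eq_sub_mod hge, Nat.mod_eq_of_lt (by omega)]; omega
    · left
      rcases Nat.lt_or_ge ((n - b) + a) n with hlt | hge
      · rw [Nat.mod_eq_of_lt hlt]; omega
      · rw [Nat.mod_eq_sub_mod hge, Nat.mod_eq_of_lt (by omega)]; omega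
    · right
      rcases Nat.lt_or_ge ((n - a) + b) n with hlt | hge
      · rw [Nat.mod_eq_of_lt hlt]; omega
      · rw [Nat.mod_eq_sub_mod hge, Nat.mod_eq_of_lt (by omega)]; omega

/-- the paraglider embeds in the complement of any cycle of length ≥ 7. -/
def pgEmb (n : ℕ) (hn : 7 ≤ n) : paraglider ↪g (cycleGraph n)ᶜ where
  toFun := ![⟨3, by omega⟩, ⟨5, by omega⟩, ⟨0, by omega⟩, ⟨1, by omega⟩, ⟨4, by omega⟩]
  inj' := by
    intro i j h
    fin_cases i <;> fin_cases j <;> simp_all [Fin.ext_iff] <;> omega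
  map_rel_iff' := by
    intro i j
    show (cycleGraph n)ᶜ.Adj ((![⟨3, by omega⟩, ⟨5, by omega⟩, ⟨0, by omega⟩, ⟨1, by omega⟩, ⟨4, by omega⟩] : Fin 5 → Fin n) i)
      ((![⟨3, by omega⟩, ⟨5, by omega⟩, ⟨0, by omega⟩, ⟨1, by omega⟩, ⟨4, by omega⟩] : Fin 5 → Fin n) j) ↔ paraglider.Adj i j
    simp only [compl_adj, ne_eq, Fin.ext_iff]
    fin_cases i <;> fin_cases j <;>
      simp [cyc_adj (by omega : 2 ≤ n), paraglider, Fin.ext_iff, -Fin.val_eq_zero_iff] <;> omega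

/-- `C₅` is self-complementary. -/
def c5Emb : cycleGraph 5 ↪g (cycleGraph 5)ᶜ where
  toFun := ![0, 2, 4, 1, 3]
  inj' := by decide
  map_rel_iff' := by decide

/-- a hole-, paraglider- and `C₆`-complement-free graph is weakly chordal. -/
theorem hp_coC6_free_weakly_chordal {V : Type} (G : SimpleGraph V)
    (hHole : HoleFree G) (hPara : ¬ HasInducedCopy G paraglider)
    (hCoC6 : ¬ HasInducedCopy G (cycleGraph 6)ᶜ) :
    WeaklyChordal G := by
  intro n hn
  refine ⟨hHole n hn, ?_⟩
  rintro ⟨e⟩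
  rcases Nat.lt_or_ge n 7 with h7 | h7
  · interval_cases n
    · exact hHole 5 (by norm_num) ⟨e.comp c5Emb⟩
    · exact hCoC6 ⟨e⟩
  · exact hPara ⟨e.comp (pgEmb n h7)⟩
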